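/- Let ν₁,...,ν_l be distinct real numbers with positive integer multiplicities m₁,...,m_l and let ϱ > 0. Suppose for each i, ∑_{j≠i} m_j (ν_iν_j − 1/ϱ²)/(ν_i − ν_j) = 0. If l ≥ 2 and some ν_i > 0, and ν₁ > 0 is chosen so that for every j ≠ 1 the number ϱν_j does not lie strictly between 1/(ϱν₁) and ϱν₁, then ϱ²ν₁ν_j = 1 for all j ≠ 1, and hence l = 2. -/

import Mathlib

/-- The Cartan identities for the slice principal curvatures in the hyperbolic
case force exactly two distinct principal curvatures with ϱ²ν₁ν₂ = 1. -/
theorem stmt1 (l : ℕ) (hl : 2 ≤ l) (nu : Fin l → ℝ) (m : Fin l → ℕ)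
    (hdist : Function.Injective nu) (hm : ∀ i, 0 < m i)
    (rho : ℝ) (hrho : 0 < rho)
    (hcartan : ∀ i : Fin l, ∑ j ∈ Finset.univ.erase i,
      (m j : ℝ) * (nu i * nu j - 1 / rho ^ 2) / (nu i - nu j) = 0)
    (hpos : ∃ i, 0 < nu i)
    (i1 : Fin l) (h1pos : 0 < nu i1)
    (hbetween : ∀ j : Fin l, j ≠ i1 →
      rho * nu j ∉ Set.Ioo (min (1 / (rho * nu i1)) (rho * nu i1))
                           (max (1 / (rho * nu i1)) (rho * nu i1))) :
    (∀ j : Fin l, j ≠ i1 → rho ^ 2 * nu i1 * nu j = 1) ∧ l = 2 := by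
  have hrho2 : (0:ℝ) < rho ^ 2 := by positivity
  have hnu1 : nu i1 ≠ 0 := ne_of_gt h1pos
  -- sign of (ν₁νⱼ - 1/ρ²)(ν₁-νⱼ)
  have hsign : ∀ j : Fin l, j ≠ i1 →
      (nu i1 * nu j - 1 / rho ^ 2) * (nu i1 - nu j) ≤ 0 := by
    intro j hj
    have hne : nu j ≠ nu i1 := fun h => hj (hdist h)
    have hb := hbetween j hj
    set a := rho * nu i1 with ha'
    set b := rho * nu j with hb'
    have hapos : 0 < a := mul_pos hrho h1pos
    have key : (a * b - 1) * (a - b) ≤ 0 := by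
      rw [Set.mem_Ioo] at hb
      push_neg at hb
      rcases lt_or_ge (min (1/a) a) b with h | h
      · have hmax := hb h
        have h1a : 1/a ≤ b := le_trans (le_max_left _ _) hmax
        have haa : a ≤ b := le_trans (le_max_right _ _) hmax
        have h1 : 1 ≤ a * b := by
          have := (div_le_iff₀ hapos).mp h1a
          nlinarith
        exact mul_nonpos_of_nonneg_of_nonpos (by linarith) (by linarith)
      · have h1a : b ≤ 1/a := le_trans h (min_le_left _ _)
        have haa : b ≤ a := le_trans h (min_le_right _ _)
        have h1 : a * b ≤ 1 := by
          have := (le_div_iff₀ hapos).mp h1a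
          nlinarith
        exact mul_nonpos_of_nonpos_of_nonneg (by linarith) (by linarith)
    have expand : (a * b - 1) * (a - b)
        = rho ^ 3 * ((nu i1 * nu j - 1 / rho ^ 2) * (nu i1 - nu j)) := by
      rw [ha', hb']; field_simp
    rw [expand] at key
    have h3 : (0:ℝ) < rho ^ 3 := by positivity
    nlinarith
  have hden : ∀ j : Fin l, j ≠ i1 → nu i1 - nu j ≠ 0 := by
    intro j hj
    exact sub_ne_zero_of_ne fun h => hj (hdist h.symm)
  -- each term of the Cartan sum at i1 is nonpositive
  have hterm : ∀ j ∈ Finset.univ.erase i1,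
      (m j : ℝ) * (nu i1 * nu j - 1 / rho ^ 2) / (nu i1 - nu j) ≤ 0 := by
    intro j hj
    have hj' : j ≠ i1 := Finset.ne_of_mem_erase hj
    have hs := hsign j hj'
    have hd := hden j hj'
    rcases lt_or_gt_of_ne hd with h | h
    · have hnum : 0 ≤ nu i1 * nu j - 1 / rho ^ 2 := by nlinarith
      exact div_nonpos_of_nonneg_of_nonpos
        (mul_nonneg (Nat.cast_nonneg _) hnum) h.le
    · have hnum : nu i1 * nu j - 1 / rho ^ 2 ≤ 0 := by nlinarith
      exact div_nonpos_of_nonpos_of_nonneg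
        (mul_nonpos_of_nonneg_of_nonpos (Nat.cast_nonneg _) hnum) h.le
  -- hence each term vanishes
  have hzero : ∀ j ∈ Finset.univ.erase i1,
      (m j : ℝ) * (nu i1 * nu j - 1 / rho ^ 2) / (nu i1 - nu j) = 0 := by
    have hsum := hcartan i1
    have hneg : ∑ j ∈ Finset.univ.erase i1,
        -((m j : ℝ) * (nu i1 * nu j - 1 / rho ^ 2) / (nu i1 - nu j)) = 0 := by
      rw [Finset.sum_neg_distrib, hsum, neg_zero]
    have := (Finset.sum_eq_zero_iff_of_nonneg
      (fun j hj => neg_nonneg.mpr (hterm j hj))).mp hneg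
    intro j hj
    have := this j hj
    linarith [neg_eq_zero.mp this]
  have main : ∀ j : Fin l, j ≠ i1 → rho ^ 2 * nu i1 * nu j = 1 := by
    intro j hj
    have hz := hzero j (Finset.mem_erase.mpr ⟨hj, Finset.mem_univ j⟩)
    have hd := hden j hj
    rw [div_eq_zero_iff] at hz
    rcases hz with hz | hz
    · rcases mul_eq_zero.mp hz with hz | hz
      · exact absurd hz (by exact_mod_cast (hm j).ne')
      · have : nu i1 * nu j = 1 / rho ^ 2 := by linarith
        field_simp at this
        linarith
    · exact absurd hz hd
  refine ⟨main, ?_⟩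
  -- all j ≠ i1 have the same value of nu, so by injectivity there is exactly one
  have hcard : (Finset.univ.erase i1).card = l - 1 := by
    rw [Finset.card_erase_of_mem (Finset.mem_univ i1), Finset.card_univ,
      Fintype.card_fin]
  have hle : (Finset.univ.erase i1).card ≤ 1 := by
    apply Finset.card_le_one.mpr
    intro a ha b hb
    have ha' : a ≠ i1 := Finset.ne_of_mem_erase ha
    have hb' : b ≠ i1 := Finset.ne_of_mem_erase hb
    have h1 := main a ha'
    have h2 := main b hb'
    have hne0 : rho ^ 2 * nu i1 ≠ 0 := by positivity
    exact hdist (mul_left_cancel₀ hne0 (h1.trans h2.symm))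
  omega
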